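/- Let K be a convex body of volume 1 in ℝⁿ and let μ_K be the uniform (Lebesgue) probability measure on K. Then ∫_K φ_{μ_K}(x) dx ≥ e^{−cn}, where c > 0 is an absolute constant. -/

import Mathlib

open MeasureTheory Real Filter
open scoped ENNReal Pointwise RealInnerProductSpace

noncomputable section

/-- The collection of closed half-spaces of `ℝⁿ` containing the point `x`. -/
def HalfSpacesAt {n : ℕ} (x : EuclideanSpace ℝ (Fin n)) : Set (Set (EuclideanSpace ℝ (Fin n))) :=
  {H | ∃ (v : EuclideanSpace ℝ (Fin n)) (a : ℝ), v ≠ 0 ∧ H = {z | a ≤ ⟪v, z⟫} ∧ x ∈ H}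

/-- Tukey's half-space depth: `φ_μ(x) = inf {μ(H) : H a closed half-space containing x}`. -/
def halfSpaceDepth {n : ℕ} (μ : Measure (EuclideanSpace ℝ (Fin n)))
    (x : EuclideanSpace ℝ (Fin n)) : ℝ≥0∞ :=
  ⨅ H ∈ HalfSpacesAt x, μ H

/-- A measure `μ` is log-concave: `μ(λA + (1-λ)B) ≥ μ(A)^λ μ(B)^(1-λ)` for compact `A, B`. -/
def IsLogConcaveMeasure {n : ℕ} (μ : Measure (EuclideanSpace ℝ (Fin n))) : Prop :=
  ∀ A B : Set (EuclideanSpace ℝ (Fin n)), IsCompact A → IsCompact B →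
    ∀ l : ℝ, 0 < l → l < 1 → μ A ^ l * μ B ^ (1 - l) ≤ μ (l • A + (1 - l) • B)

/-- Non-degenerate: every affine hyperplane has measure `< 1`. -/
def IsNonDegenerate {n : ℕ} (μ : Measure (EuclideanSpace ℝ (Fin n))) : Prop :=
  ∀ (v : EuclideanSpace ℝ (Fin n)) (a : ℝ), v ≠ 0 → μ {z | ⟪v, z⟫ = a} < 1

/-- The covariance matrix of a measure `μ` on `ℝⁿ`. -/
def covMatrix {n : ℕ} (μ : Measure (EuclideanSpace ℝ (Fin n))) : Matrix (Fin n) (Fin n) ℝ :=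
  Matrix.of fun i j => (∫ x, x i * x j ∂μ) - (∫ x, x i ∂μ) * (∫ x, x j ∂μ)

/-- A measure is centered if `∫ ⟨ξ, x⟩ dμ(x) = 0` for all `ξ`. -/
def IsCentered {n : ℕ} (μ : Measure (EuclideanSpace ℝ (Fin n))) : Prop :=
  ∀ ξ : EuclideanSpace ℝ (Fin n), ∫ x, ⟪ξ, x⟫ ∂μ = 0

/-- A measure is isotropic if it is centered and its covariance matrix is the identity. -/
def IsIsotropic {n : ℕ} (μ : Measure (EuclideanSpace ℝ (Fin n))) : Prop :=
  IsCentered μ ∧ covMatrix μ = 1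

/-- The isotropic constant `L_μ = ‖f‖_∞^(1/n) · (det Cov μ)^(1/(2n))` of a measure `μ`
with density `f`. -/
def isoConst (n : ℕ) (f : EuclideanSpace ℝ (Fin n) → ℝ)
    (μ : Measure (EuclideanSpace ℝ (Fin n))) : ℝ :=
  (essSup f volume) ^ ((1 : ℝ)/n) * (covMatrix μ).det ^ ((1 : ℝ)/(2*n))

/-- The logarithmic Laplace transform `Λ_μ(u) = ln ∫ e^⟨u,x⟩ dμ(x)` (with values in `EReal`). -/
def logLaplace {n : ℕ} (μ : Measure (EuclideanSpace ℝ (Fin n)))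
    (u : EuclideanSpace ℝ (Fin n)) : EReal :=
  ENNReal.log (∫⁻ x, ENNReal.ofReal (Real.exp ⟪u, x⟫) ∂μ)

/-- The Cramér transform `Λ*_μ(x) = sup_u (⟨x,u⟩ − Λ_μ(u))`. -/
def cramer {n : ℕ} (μ : Measure (EuclideanSpace ℝ (Fin n)))
    (x : EuclideanSpace ℝ (Fin n)) : EReal :=
  ⨆ u : EuclideanSpace ℝ (Fin n), ((⟪x, u⟫ : ℝ) : EReal) - logLaplace μ u

/-- `B_t(μ) = {x : Λ*_μ(x) ≤ t}`. -/
def Bset {n : ℕ} (μ : Measure (EuclideanSpace ℝ (Fin n))) (t : ℝ) :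
    Set (EuclideanSpace ℝ (Fin n)) :=
  {x | cramer μ x ≤ (t : EReal)}

/-- The one-sided `L_t`-centroid body `Z_t⁺(μ)`, described via its support function
`h(y) = (∫ ⟨y,z⟩₊^t dμ(z))^(1/t)`. -/
def Zplus {n : ℕ} (μ : Measure (EuclideanSpace ℝ (Fin n))) (t : ℝ) :
    Set (EuclideanSpace ℝ (Fin n)) :=
  {x | ∀ y : EuclideanSpace ℝ (Fin n),
    ⟪y, x⟫ ≤ (∫ z, (max ⟪y, z⟫ 0) ^ t ∂μ) ^ (1/t)}

/-- The `L_t`-centroid body `Z_t(μ) = {x : |⟨v,x⟩|^t ≤ ∫ |⟨v,y⟩|^t dμ(y) for all v}`. -/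
def Zbody {n : ℕ} (μ : Measure (EuclideanSpace ℝ (Fin n))) (t : ℝ) :
    Set (EuclideanSpace ℝ (Fin n)) :=
  {x | ∀ v : EuclideanSpace ℝ (Fin n), |⟪v, x⟫| ^ t ≤ ∫ y, |⟪v, y⟫| ^ t ∂μ}

/-- `μ` is `α`-regular. -/
def IsRegularMeasure {n : ℕ} (μ : Measure (EuclideanSpace ℝ (Fin n))) (α : ℝ) : Prop :=
  ∀ s t : ℝ, 2 ≤ t → t ≤ s → ∀ v : EuclideanSpace ℝ (Fin n),
    (∫ x, |⟪v, x⟫| ^ s ∂μ) ^ (1/s) ≤ α * (s / t) * (∫ x, |⟪v, x⟫| ^ t ∂μ) ^ (1/t)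

/-- Ball's body `K_t(f)`, the star body with radial function
`ρ(x) = ((1/f(0)) ∫₀^∞ t r^(t-1) f(rx) dr)^(1/t)`. -/
def BallBody {n : ℕ} (f : EuclideanSpace ℝ (Fin n) → ℝ) (t : ℝ) :
    Set (EuclideanSpace ℝ (Fin n)) :=
  {x | f 0 / t ≤ ∫ r in Set.Ioi (0 : ℝ), r ^ (t - 1) * f (r • x)}

/-- `R_t(μ) = {x : f_μ(x) ≥ e^{-t} f_μ(0)}`. -/
def Rset {n : ℕ} (f : EuclideanSpace ℝ (Fin n) → ℝ) (t : ℝ) :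
    Set (EuclideanSpace ℝ (Fin n)) :=
  {x | Real.exp (-t) * f 0 ≤ f x}

section AuxDepth

variable {n : ℕ}

/-- Reflection about `x` preserves Lebesgue measure. -/
lemma reflect_volume (x : EuclideanSpace ℝ (Fin n)) (A : Set (EuclideanSpace ℝ (Fin n))) :
    volume ((fun z => (2:ℝ) • x - z) ⁻¹' A) = volume A := by
  have h : (fun z : EuclideanSpace ℝ (Fin n) => (2:ℝ) • x - z)
      = (fun y : EuclideanSpace ℝ (Fin n) => (2:ℝ) • x + y) ∘ (fun z => (-1:ℝ) • z) := by
    funext z; simp [sub_eq_add_neg]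
  rw [h, Set.preimage_comp, Measure.addHaar_preimage_smul volume (by norm_num : (-1:ℝ) ≠ 0),
    measure_preimage_add]
  have : |(((-1:ℝ)) ^ (Module.finrank ℝ (EuclideanSpace ℝ (Fin n))))⁻¹| = 1 := by
    rcases neg_one_pow_eq_or ℝ (Module.finrank ℝ (EuclideanSpace ℝ (Fin n))) with h | h <;>
      rw [h] <;> norm_num
  rw [this]; simp

/-- Key pointwise bound: twice the Tukey depth dominates the volume of the
symmetrized body `K ∩ (2x - K)`. -/
lemma symm_le_two_mul_depth {K : Set (EuclideanSpace ℝ (Fin n))} (hK : MeasurableSet K)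
    (x : EuclideanSpace ℝ (Fin n)) :
    volume (K ∩ {z | (2:ℝ) • x - z ∈ K}) / 2 ≤ halfSpaceDepth (volume.restrict K) x := by
  set S : Set (EuclideanSpace ℝ (Fin n)) := K ∩ {z | (2:ℝ) • x - z ∈ K} with hS
  refine le_iInf₂ fun H hH => ?_
  obtain ⟨v, a, hv, rfl, hxH⟩ := hH
  set P : Set (EuclideanSpace ℝ (Fin n)) := {z | ⟪v, x⟫ ≤ ⟪v, z⟫} with hP
  have hHmeas : MeasurableSet {z : EuclideanSpace ℝ (Fin n) | a ≤ ⟪v, z⟫} := by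
    have : Continuous fun z : EuclideanSpace ℝ (Fin n) => ⟪v, z⟫ :=
      continuous_const.inner continuous_id
    exact measurableSet_le measurable_const this.measurable
  -- S⁺ := S ∩ P lies in H ∩ K
  have hsub : S ∩ P ⊆ {z | a ≤ ⟪v, z⟫} ∩ K := by
    rintro z ⟨⟨hzK, _⟩, hzP⟩
    have hx' : a ≤ ⟪v, x⟫ := hxH
    have hzP' : ⟪v, x⟫ ≤ ⟪v, z⟫ := hzP
    exact ⟨le_trans hx' hzP', hzK⟩
  -- reflection maps S ∩ Pᶜ into S ∩ P
  have hrefl : S ∩ {z | ⟪v, z⟫ ≤ ⟪v, x⟫} ⊆ (fun z => (2:ℝ) • x - z) ⁻¹' (S ∩ P) := by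
    rintro z ⟨⟨hzK, hz2⟩, hzQ⟩
    refine ⟨⟨hz2, ?_⟩, ?_⟩
    · show (2:ℝ) • x - ((2:ℝ) • x - z) ∈ K
      simpa using hzK
    · show ⟪v, x⟫ ≤ ⟪v, (2:ℝ) • x - z⟫
      have hzQ' : ⟪v, z⟫ ≤ ⟪v, x⟫ := hzQ
      rw [inner_sub_right, inner_smul_right]
      linarith [hzQ']
  have hcover : S ⊆ (S ∩ P) ∪ (S ∩ {z | ⟪v, z⟫ ≤ ⟪v, x⟫}) := by
    intro z hz
    rcases le_total (⟪v, x⟫ : ℝ) ⟪v, z⟫ with h | h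
    · exact Or.inl ⟨hz, h⟩
    · exact Or.inr ⟨hz, h⟩
  have hvolS : volume S ≤ 2 * volume (S ∩ P) := by
    calc volume S ≤ volume ((S ∩ P) ∪ (S ∩ {z | ⟪v, z⟫ ≤ ⟪v, x⟫})) := measure_mono hcover
    _ ≤ volume (S ∩ P) + volume (S ∩ {z | ⟪v, z⟫ ≤ ⟪v, x⟫}) := measure_union_le _ _
    _ ≤ volume (S ∩ P) + volume ((fun z => (2:ℝ) • x - z) ⁻¹' (S ∩ P)) :=
        add_le_add_right (measure_mono hrefl) _
    _ = volume (S ∩ P) + volume (S ∩ P) := by rw [reflect_volume]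
    _ = 2 * volume (S ∩ P) := (two_mul _).symm
  have hμ : volume (S ∩ P) ≤ (volume.restrict K) {z | a ≤ ⟪v, z⟫} := by
    rw [Measure.restrict_apply hHmeas]
    exact measure_mono hsub
  exact (ENNReal.div_le_of_le_mul' hvolS).trans hμ

/-- The Rogers–Shephard–type integral identity:
`∫_K vol(K ∩ (2x - K)) dx = 2⁻ⁿ vol(K)²` for a convex body of volume one. -/
lemma integral_symm_volume {K : Set (EuclideanSpace ℝ (Fin n))} (hK : MeasurableSet K)
    (hconv : Convex ℝ K) (hvol : volume K = 1) :
    ∫⁻ x in K, volume (K ∩ {z | (2:ℝ) • x - z ∈ K}) =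
      ENNReal.ofReal ((2 ^ n : ℝ)⁻¹) := by
  classical
  set T : Set (EuclideanSpace ℝ (Fin n) × EuclideanSpace ℝ (Fin n)) :=
    {p | p.2 ∈ K ∧ (2:ℝ) • p.1 - p.2 ∈ K} with hT
  have hcont : Continuous fun p : EuclideanSpace ℝ (Fin n) × EuclideanSpace ℝ (Fin n) =>
      (2:ℝ) • p.1 - p.2 := (continuous_fst.const_smul (2:ℝ)).sub continuous_snd
  have hTmeas : MeasurableSet T := by
    exact (hK.preimage measurable_snd).inter (hK.preimage hcont.measurable)
  set F : EuclideanSpace ℝ (Fin n) × EuclideanSpace ℝ (Fin n) → ℝ≥0∞ :=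
    T.indicator (fun _ => 1) with hF
  have hFmeas : Measurable F := (measurable_const.indicator hTmeas)
  -- inner integral in `z`
  have hinner : ∀ x, ∫⁻ z, F (x, z) = volume (K ∩ {z | (2:ℝ) • x - z ∈ K}) := by
    intro x
    have hset : MeasurableSet (K ∩ {z : EuclideanSpace ℝ (Fin n) | (2:ℝ) • x - z ∈ K}) := by
      have : Continuous fun z : EuclideanSpace ℝ (Fin n) => (2:ℝ) • x - z :=
        continuous_const.sub continuous_id
      exact hK.inter (hK.preimage this.measurable)
    have : (fun z => F (x, z))
        = (K ∩ {z | (2:ℝ) • x - z ∈ K}).indicator (fun _ => (1:ℝ≥0∞)) := by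
      funext z
      simp [hF, hT, Set.indicator_apply, Set.mem_setOf_eq, Set.mem_inter_iff]
    rw [this]
    exact lintegral_indicator_one hset
  -- the integrand vanishes off `K`
  have hzero : ∀ x, x ∉ K → volume (K ∩ {z | (2:ℝ) • x - z ∈ K}) = 0 := by
    intro x hx
    have : K ∩ {z | (2:ℝ) • x - z ∈ K} = ∅ := by
      ext z
      simp only [Set.mem_inter_iff, Set.mem_setOf_eq, Set.mem_empty_iff_false, iff_false]
      rintro ⟨hz, hz2⟩
      apply hx
      have := hconv hz hz2 (by norm_num : (0:ℝ) ≤ 1/2) (by norm_num : (0:ℝ) ≤ 1/2)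
        (by norm_num : (1/2 : ℝ) + 1/2 = 1)
      have heq : (1/2 : ℝ) • z + (1/2 : ℝ) • ((2:ℝ) • x - z) = x := by
        rw [smul_sub, smul_smul]
        norm_num
      rwa [heq] at this
    rw [this, measure_empty]
  have hindic : K.indicator (fun x => volume (K ∩ {z | (2:ℝ) • x - z ∈ K}))
      = fun x => volume (K ∩ {z | (2:ℝ) • x - z ∈ K}) := by
    funext x
    by_cases hx : x ∈ K
    · rw [Set.indicator_of_mem hx]
    · rw [Set.indicator_of_notMem hx, hzero x hx]
  -- integral in `x` at fixed `z`
  have houter : ∀ z, ∫⁻ x, F (x, z)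
      = K.indicator (fun _ => ENNReal.ofReal ((2 ^ n : ℝ)⁻¹)) z := by
    intro z
    by_cases hz : z ∈ K
    · have h1 : (fun x => F (x, z))
          = ((fun x : EuclideanSpace ℝ (Fin n) => (2:ℝ) • x) ⁻¹'
              ((fun y => y + (-z)) ⁻¹' K)).indicator (fun _ => (1:ℝ≥0∞)) := by
        funext x
        simp [hF, hT, Set.indicator_apply, Set.mem_setOf_eq, hz, sub_eq_add_neg]
      have h2 : MeasurableSet ((fun y : EuclideanSpace ℝ (Fin n) => y + (-z)) ⁻¹' K) :=
        hK.preimage (continuous_id.add continuous_const).measurable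
      have h3 : Continuous fun x : EuclideanSpace ℝ (Fin n) => (2:ℝ) • x :=
        continuous_id.const_smul (2:ℝ)
      calc ∫⁻ x, F (x, z)
          = volume ((fun x : EuclideanSpace ℝ (Fin n) => (2:ℝ) • x) ⁻¹'
              ((fun y => y + (-z)) ⁻¹' K)) := by
            rw [h1]; exact lintegral_indicator_one (h2.preimage h3.measurable)
        _ = ENNReal.ofReal |((2:ℝ) ^ Module.finrank ℝ (EuclideanSpace ℝ (Fin n)))⁻¹| *
              volume ((fun y => y + (-z)) ⁻¹' K) :=
            Measure.addHaar_preimage_smul volume (by norm_num : (2:ℝ) ≠ 0) _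
        _ = K.indicator (fun _ => ENNReal.ofReal ((2 ^ n : ℝ)⁻¹)) z := by
            rw [measure_preimage_add_right, hvol, Set.indicator_of_mem hz, mul_one,
              finrank_euclideanSpace_fin]
            congr 1
            rw [abs_of_pos]
            positivity
    · have h1 : (fun x => F (x, z)) = fun _ => 0 := by
        funext x
        simp [hF, hT, Set.indicator_apply, Set.mem_setOf_eq, hz]
      rw [h1, lintegral_const, zero_mul, Set.indicator_of_notMem hz]
  calc ∫⁻ x in K, volume (K ∩ {z | (2:ℝ) • x - z ∈ K})
      = ∫⁻ x, volume (K ∩ {z | (2:ℝ) • x - z ∈ K}) := by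
        rw [← lintegral_indicator hK, hindic]
    _ = ∫⁻ x, ∫⁻ z, F (x, z) := by simp_rw [hinner]
    _ = ∫⁻ z, ∫⁻ x, F (x, z) := lintegral_lintegral_swap hFmeas.aemeasurable
    _ = ∫⁻ z, K.indicator (fun _ => ENNReal.ofReal ((2 ^ n : ℝ)⁻¹)) z := by simp_rw [houter]
    _ = ENNReal.ofReal ((2 ^ n : ℝ)⁻¹) := by
        rw [lintegral_indicator_const hK, hvol, mul_one]

/-- The elementary numerical inequality `e^{-2n} ≤ 2^{-(n+1)}` for `n ≥ 1`. -/
lemma exp_two_bound (n : ℕ) (hn : 1 ≤ n) : Real.exp (-(2 * n)) ≤ (2 ^ n : ℝ)⁻¹ / 2 := by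
  have h2e : (2:ℝ) ≤ Real.exp 1 := by
    have := Real.add_one_le_exp (1:ℝ); linarith
  have h1 : (2:ℝ) ^ (n+1) ≤ Real.exp 1 ^ (n+1) := pow_le_pow_left₀ (by norm_num) h2e _
  have h2 : Real.exp 1 ^ (n+1) = Real.exp ((n:ℝ)+1) := by
    rw [← Real.exp_nat_mul]
    norm_num
  have h3 : Real.exp ((n:ℝ)+1) ≤ Real.exp (2*n) := by
    apply Real.exp_le_exp.2
    have : (1:ℝ) ≤ n := by exact_mod_cast hn
    linarith
  have h4 : (2:ℝ)^(n+1) ≤ Real.exp (2*n) := by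
    calc (2:ℝ)^(n+1) ≤ Real.exp 1 ^ (n+1) := h1
    _ = Real.exp ((n:ℝ)+1) := h2
    _ ≤ _ := h3
  have hpos : (0:ℝ) < 2^(n+1) := by positivity
  rw [Real.exp_neg]
  have heq : ((2:ℝ)^n)⁻¹ / 2 = ((2:ℝ)^(n+1))⁻¹ := by
    rw [pow_succ]
    field_simp
  rw [heq]
  exact inv_anti₀ hpos h4

end AuxDepth

/-- lower bound for the expected depth of the uniform measure on a convex body. -/
theorem expected_depth_lower_bound_convex_body :
    ∃ c : ℝ, 0 < c ∧ ∀ (n : ℕ) (K : Set (EuclideanSpace ℝ (Fin n))),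
      IsCompact K → Convex ℝ K → (interior K).Nonempty → volume K = 1 →
      ENNReal.ofReal (Real.exp (-(c * n))) ≤
        ∫⁻ x in K, halfSpaceDepth (volume.restrict K) x := by
  refine ⟨2, two_pos, ?_⟩
  intro n K hKc hKconv hKint hKvol
  have hKm : MeasurableSet K := hKc.measurableSet
  rcases Nat.eq_zero_or_pos n with hn | hn
  · subst hn
    have hdepth : ∀ x : EuclideanSpace ℝ (Fin 0),
        halfSpaceDepth (volume.restrict K) x = ⊤ := by
      intro x
      have he : HalfSpacesAt x = ∅ := by
        ext H
        simp only [HalfSpacesAt, Set.mem_setOf_eq, Set.mem_empty_iff_false, iff_false,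
          not_exists]
        rintro v a ⟨hv, -⟩
        exact hv (Subsingleton.elim v 0)
      rw [halfSpaceDepth, he]
      simp
    have htop : ∫⁻ x in K, halfSpaceDepth (volume.restrict K) x = ⊤ := by
      rw [lintegral_congr hdepth, setLIntegral_const, hKvol, mul_one]
    rw [htop]
    exact le_top
  · have step1 : ∫⁻ x in K, volume (K ∩ {z | (2:ℝ) • x - z ∈ K}) / 2
        ≤ ∫⁻ x in K, halfSpaceDepth (volume.restrict K) x :=
      lintegral_mono fun x => symm_le_two_mul_depth hKm x
    have step2 : ∫⁻ x in K, volume (K ∩ {z | (2:ℝ) • x - z ∈ K}) / 2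
        = ENNReal.ofReal ((2 ^ n : ℝ)⁻¹) / 2 := by
      simp_rw [div_eq_mul_inv]
      rw [lintegral_mul_const' _ _ (by norm_num : (2:ℝ≥0∞)⁻¹ ≠ ⊤),
        integral_symm_volume hKm hKconv hKvol]
    refine le_trans ?_ (step2 ▸ step1)
    have h2 : ENNReal.ofReal ((2 ^ n : ℝ)⁻¹) / 2 = ENNReal.ofReal ((2 ^ n : ℝ)⁻¹ / 2) := by
      rw [ENNReal.ofReal_div_of_pos (by norm_num : (0:ℝ) < 2)]
      norm_num
    rw [h2]
    exact ENNReal.ofReal_le_ofReal (exp_two_bound n hn)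

end
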